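/- Let a > 0 and let r_c > 0 satisfy sinh²r_c = 1. On U = {(t,r,φ,z) ∈ ℝ⁴ : r > r_c} consider the Gödel metric g with nonzero components g_{00} = a², g_{02} = g_{20} = a²√2 sinh²r, g_{22} = a² sinh²r(sinh²r − 1), g_{11} = g_{33} = −a², the observer field v^μ = (0, 0, 1/(a sinh r √(sinh²r − 1)), 0) with covariant components v_μ = Σ_ν g_{μν}v^ν, and b defined by 1 + b = sinh²r(sinh²r − 1). Then the covariant dragged metric q̂_{μν} = g_{μν} − (b/(1+b)) v_μ v_ν has nonzero components q̂_{00} = a²(3 − sinh⁴r)/(sinh²r − 1)², q̂_{02} = q̂_{20} = a²√2/(sinh²r − 1), q̂_{22} = a², q̂_{11} = q̂_{33} = −a². -/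

import Mathlib

open scoped BigOperators

/-- The Gödel metric in cylindrical coordinates (t, r, φ, z) = (x⁰, x¹, x², x³). -/
noncomputable def gGodel (a : ℝ) (x : Fin 4 → ℝ) : Matrix (Fin 4) (Fin 4) ℝ :=
  !![a ^ 2, 0, a ^ 2 * Real.sqrt 2 * Real.sinh (x 1) ^ 2, 0;
     0, -a ^ 2, 0, 0;
     a ^ 2 * Real.sqrt 2 * Real.sinh (x 1) ^ 2, 0,
       a ^ 2 * Real.sinh (x 1) ^ 2 * (Real.sinh (x 1) ^ 2 - 1), 0;
     0, 0, 0, -a ^ 2]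

/-- The circular observer `v^μ = (0, 0, 1/(a sinh r √(sinh²r − 1)), 0)`. -/
noncomputable def vGodel (a : ℝ) (x : Fin 4 → ℝ) : Fin 4 → ℝ :=
  ![0, 0, (a * Real.sinh (x 1) * Real.sqrt (Real.sinh (x 1) ^ 2 - 1))⁻¹, 0]

/-- The dragged-metric coefficient: `b` with `1 + b = sinh²r(sinh²r − 1)`. -/
noncomputable def bGodel (x : Fin 4 → ℝ) : ℝ :=
  Real.sinh (x 1) ^ 2 * (Real.sinh (x 1) ^ 2 - 1) - 1

/-- The dragged Gödel metric. -/
noncomputable def qGodel (a : ℝ) (x : Fin 4 → ℝ) : Matrix (Fin 4) (Fin 4) ℝ :=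
  !![a ^ 2 * (3 - Real.sinh (x 1) ^ 4) / (Real.sinh (x 1) ^ 2 - 1) ^ 2, 0,
       a ^ 2 * Real.sqrt 2 / (Real.sinh (x 1) ^ 2 - 1), 0;
     0, -a ^ 2, 0, 0;
     a ^ 2 * Real.sqrt 2 / (Real.sinh (x 1) ^ 2 - 1), 0, a ^ 2, 0;
     0, 0, 0, -a ^ 2]

set_option maxHeartbeats 1000000

/-- In the acausal region of Gödel space-time, the covariant dragged metric
`q̂_{μν} = g_{μν} − (b/(1+b)) v_μ v_ν` associated with the circular observer and
`1 + b = sinh²r(sinh²r−1)` has the stated components. -/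
theorem godel_dragged_metric (a rc : ℝ) (ha : 0 < a) (hrc : 0 < rc)
    (hrc1 : Real.sinh rc ^ 2 = 1) :
    ∀ x : Fin 4 → ℝ, rc < x 1 →
      ∀ μ ν : Fin 4,
        gGodel a x μ ν - (bGodel x / (1 + bGodel x)) *
            (∑ α, gGodel a x μ α * vGodel a x α) * (∑ α, gGodel a x ν α * vGodel a x α)
          = qGodel a x μ ν := by
  intro x hx μ ν
  have hrcpos : 0 < Real.sinh rc := by
    have := Real.sinh_zero
    nlinarith [Real.sinh_lt_sinh.2 hrc]
  have hrc' : Real.sinh rc = 1 := by nlinarith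
  have hs : 1 < Real.sinh (x 1) := by
    rw [← hrc']; exact Real.sinh_lt_sinh.2 hx
  set s := Real.sinh (x 1) with hsdef
  have hs0 : 0 < s := lt_trans one_pos hs
  have hs2 : 0 < s ^ 2 - 1 := by nlinarith
  set w := Real.sqrt (s ^ 2 - 1) with hwdef
  set u := Real.sqrt 2 with hudef
  have hw2 : w ^ 2 = s ^ 2 - 1 := Real.sq_sqrt hs2.le
  have hw4 : w ^ 4 = (s ^ 2 - 1) ^ 2 := by rw [show (4:ℕ) = 2*2 from rfl, pow_mul, hw2]
  have hu2 : u ^ 2 = 2 := Real.sq_sqrt (by norm_num)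
  have hu4 : u ^ 4 = 4 := by rw [show (4:ℕ) = 2*2 from rfl, pow_mul, hu2]; norm_num
  have hw0 : 0 < w := Real.sqrt_pos.2 hs2
  have hwne : w ≠ 0 := hw0.ne'
  have hune : u ≠ 0 := by rw [hudef]; positivity
  have hane : a ≠ 0 := ha.ne'
  have hsne : s ≠ 0 := hs0.ne'
  have hs2ne : s ^ 2 - 1 ≠ 0 := hs2.ne'
  have hb : 1 + bGodel x = s ^ 2 * (s ^ 2 - 1) := by unfold bGodel; rw [← hsdef]; ring
  fin_cases μ <;> fin_cases ν <;>
    simp only [gGodel, vGodel, qGodel, bGodel, Fin.sum_univ_four, hb, ← hsdef, ← hwdef, ← hudef,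
      Matrix.cons_val', Matrix.cons_val_zero, Matrix.cons_val_one, Matrix.head_cons,
      Matrix.empty_val', Matrix.cons_val_fin_one, Matrix.head_fin_const, Matrix.cons_val_two,
      Matrix.tail_cons, Matrix.cons_val_three, Fin.isValue, Fin.mk_zero, Fin.mk_one, Fin.reduceFinMk,
      Matrix.of_apply] <;>
  · field_simp
    try ring_nf
    try simp only [hw2, hw4, hu2, hu4]
    try ring_nf
    try ring
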